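/- Let M be the m×n binary incidence matrix of an incidence structure of m points and n blocks, where each block contains exactly k points and any two distinct blocks intersect in at most γ points. Then every stopping set S of M satisfies |S| ≥ k/γ + 1; consequently M is ⌈k/γ⌉-decodable. -/

import Mathlib

/-- `M` is `d`-decodable: every nonempty set of at most `d` columns contains a
row of weight exactly one. -/
def IsDecodable {m n : ℕ} (M : Fin m → Fin n → Bool) (d : ℕ) : Prop :=
  ∀ S : Finset (Fin n), S.Nonempty → S.card ≤ d →
    ∃ i : Fin m, (S.filter (fun j => M i j = true)).card = 1

/-- A stopping set: a nonempty set of columns whose submatrix has no row of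
weight exactly one. -/
def IsStoppingSet {m n : ℕ} (M : Fin m → Fin n → Bool) (S : Finset (Fin n)) : Prop :=
  S.Nonempty ∧ ∀ i : Fin m, (S.filter (fun j => M i j = true)).card ≠ 1

theorem incidence_stopping_bound {m n k γ : ℕ} (hγ : 0 < γ)
    (M : Fin m → Fin n → Bool)
    -- each block (column) contains exactly `k` points
    (hk : ∀ j, (Finset.univ.filter (fun i => M i j = true)).card = k)
    -- any two distinct blocks intersect in at most `γ` points
    (hint : ∀ j₁ j₂ : Fin n, j₁ ≠ j₂ →
      (Finset.univ.filter (fun i => M i j₁ = true ∧ M i j₂ = true)).card ≤ γ) :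
    (∀ S : Finset (Fin n), IsStoppingSet M S → (k : ℝ) / γ + 1 ≤ S.card) ∧
    IsDecodable M ⌈(k : ℝ) / γ⌉₊ := by
  have main : ∀ S : Finset (Fin n), IsStoppingSet M S → (k : ℝ) / γ + 1 ≤ S.card := by
    intro S hS
    obtain ⟨⟨j₀, hj₀⟩, hstop⟩ := hS
    -- key combinatorial bound : k ≤ (S.card - 1) * γ
    have key : k ≤ (S.card - 1) * γ := by
      have hsub : (Finset.univ.filter (fun i => M i j₀ = true)) ⊆
          (S.erase j₀).biUnion (fun j => Finset.univ.filter
            (fun i => M i j₀ = true ∧ M i j = true)) := by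
        intro i hi
        simp only [Finset.mem_filter, Finset.mem_univ, true_and] at hi
        have h1 : j₀ ∈ S.filter (fun j => M i j = true) := by
          simp [hj₀, hi]
        have hge : 2 ≤ (S.filter (fun j => M i j = true)).card := by
          rcases Nat.lt_or_ge (S.filter (fun j => M i j = true)).card 2 with h | h
          · interval_cases h' : (S.filter (fun j => M i j = true)).card
            · simp [Finset.card_eq_zero] at h'
              exact absurd h1 (by simp [h', hj₀])
            · exact absurd h' (hstop i)
          · exact h
        obtain ⟨j, hjmem, hjne⟩ := Finset.exists_mem_ne hge j₀
        simp only [Finset.mem_filter] at hjmem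
        simp only [Finset.mem_biUnion, Finset.mem_erase, Finset.mem_filter,
          Finset.mem_univ, true_and]
        exact ⟨j, ⟨hjne, hjmem.1⟩, hi, hjmem.2⟩
      calc k = (Finset.univ.filter (fun i => M i j₀ = true)).card := (hk j₀).symm
        _ ≤ ((S.erase j₀).biUnion (fun j => Finset.univ.filter
              (fun i => M i j₀ = true ∧ M i j = true))).card := Finset.card_le_card hsub
        _ ≤ ∑ j ∈ S.erase j₀, (Finset.univ.filter
              (fun i => M i j₀ = true ∧ M i j = true)).card := Finset.card_biUnion_le
        _ ≤ ∑ _j ∈ S.erase j₀, γ := by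
            refine Finset.sum_le_sum fun j hj => ?_
            exact hint j₀ j (Ne.symm (Finset.mem_erase.mp hj).1)
        _ = (S.card - 1) * γ := by
            rw [Finset.sum_const, Finset.card_erase_of_mem hj₀, smul_eq_mul]
    have hcard : 1 ≤ S.card := Finset.card_pos.mpr ⟨j₀, hj₀⟩
    have hγ' : (0:ℝ) < γ := by exact_mod_cast hγ
    rw [div_add' _ _ _ (ne_of_gt hγ'), div_le_iff₀ hγ']
    have : ((S.card : ℝ) - 1) * γ = ((S.card - 1 : ℕ) : ℝ) * γ := by
      rw [Nat.cast_sub hcard]; push_cast; ring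
    have hkey : (k : ℝ) ≤ ((S.card - 1 : ℕ) : ℝ) * γ := by exact_mod_cast key
    nlinarith [hkey, this]
  refine ⟨main, ?_⟩
  intro S hne hle
  by_contra h
  push_neg at h
  have hstop : IsStoppingSet M S := ⟨hne, fun i => h i⟩
  have h1 := main S hstop
  have h2 : (S.card : ℝ) ≤ ⌈(k : ℝ) / γ⌉₊ := by exact_mod_cast hle
  have hγ' : (0:ℝ) < γ := by exact_mod_cast hγ
  have h3 : (⌈(k : ℝ) / γ⌉₊ : ℝ) < (k : ℝ) / γ + 1 :=
    Nat.ceil_lt_add_one (by positivity)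
  linarith
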